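/- (Hermite–Poulain) The finite-order linear differential operator T = a_0 + a_1 (d/dx) + ... + a_k (d/dx)^k with constant real coefficients maps every real polynomial with all real roots to a polynomial with all real roots if and only if its symbol polynomial Q(t) = a_0 + a_1 t + ... + a_k t^k has all real roots. -/

import Mathlib

open Polynomial
open scoped ENNReal

noncomputable section

/-- A real polynomial is hyperbolic (all its roots are real) iff the number of its
real roots counted with multiplicity equals its degree. -/
def Hyperbolic (p : Polynomial ℝ) : Prop := p.roots.card = p.natDegree

/-- The list of real roots of `p` (with multiplicity), sorted in increasing order. -/
def sortedRoots (p : Polynomial ℝ) : List ℝ := p.roots.sort (· ≤ ·)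

/-- The mesh of `p`: the minimal distance between consecutive real roots of `p`
(counted with multiplicity); it is `⊤` if `p` has fewer than two real roots. -/
def mesh (p : Polynomial ℝ) : ℝ≥0∞ :=
  ⨅ i ∈ Finset.range ((sortedRoots p).length - 1),
    ENNReal.ofReal ((sortedRoots p).getD (i + 1) 0 - (sortedRoots p).getD i 0)

/-- The list of absolute values of the real roots of `p` (with multiplicity),
sorted in increasing order. -/
def sortedAbsRoots (p : Polynomial ℝ) : List ℝ := (p.roots.map (fun x => |x|)).sort (· ≤ ·)

/-- The logarithmic mesh of `p`: the minimal quotient of consecutive absolute values of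
roots of `p`, the roots being ordered so that `|x₁| ≤ |x₂| ≤ ⋯ ≤ |x_k|`;
it is `⊤` if `p` has fewer than two real roots. -/
def lmesh (p : Polynomial ℝ) : ℝ≥0∞ :=
  ⨅ i ∈ Finset.range ((sortedAbsRoots p).length - 1),
    ENNReal.ofReal ((sortedAbsRoots p).getD (i + 1) 0 / (sortedAbsRoots p).getD i 0)

/-- The diagonal operator associated with the sequence `α`, acting on `ℝ[x]`
by `x^i ↦ α i • x^i`. -/
def diagOp (α : ℕ → ℝ) (p : Polynomial ℝ) : Polynomial ℝ :=
  ∑ i ∈ p.support, Polynomial.C (α i * p.coeff i) * Polynomial.X ^ i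

/-- The polynomial `∑_{j=0}^k C(k,j) * a j * x^j` (binomial normalization). -/
def binPoly (k : ℕ) (a : ℕ → ℝ) : Polynomial ℝ :=
  ∑ j ∈ Finset.range (k + 1), Polynomial.C ((k.choose j : ℝ) * a j) * Polynomial.X ^ j

/-- The Schur–Szegő product of two polynomials of degree `k`: if
`P = ∑ C(k,j) aⱼ xʲ` and `Q = ∑ C(k,j) bⱼ xʲ`, then `P * Q = ∑ C(k,j) aⱼ bⱼ xʲ`,
i.e. the `j`-th coefficient of `P*Q` is `C(k,j)⁻¹ * (coeff j of P) * (coeff j of Q)`. -/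
def schurSzego (k : ℕ) (P Q : Polynomial ℝ) : Polynomial ℝ :=
  ∑ j ∈ Finset.range (k + 1),
    Polynomial.C ((k.choose j : ℝ)⁻¹ * P.coeff j * Q.coeff j) * Polynomial.X ^ j

/-- One-sided (non-strict) interlacing: writing the sorted roots of `f` as
`x₁ ≤ ⋯ ≤ x_n` and those of `g` as `y₁ ≤ ⋯ ≤ y_m`, we have
`x₁ ≤ y₁ ≤ x₂ ≤ y₂ ≤ ⋯`. -/
def InterlaceAux (f g : Polynomial ℝ) : Prop :=
  (∀ i < (sortedRoots f).length, (sortedRoots f).getD i 0 ≤ (sortedRoots g).getD i 0) ∧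
  (∀ i, i + 1 < (sortedRoots f).length →
    (sortedRoots g).getD i 0 ≤ (sortedRoots f).getD (i + 1) 0)

/-- The roots of `f` and `g` (non-strictly) interlace. -/
def RootsInterlace (f g : Polynomial ℝ) : Prop := InterlaceAux f g ∨ InterlaceAux g f

namespace HP

open Set Filter Topology



theorem helper_right {f f' : ℝ → ℝ} (hd : ∀ x, HasDerivAt f (f' x) x) {a x₁ : ℝ}
    (ha : f a = 0) (hax : a < x₁) (hpos : 0 < f x₁) (hlim : Tendsto f atTop (𝓝 0)) :
    ∃ c, a < c ∧ f' c = 0 := by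
  have hcont : Continuous f :=
    continuous_iff_continuousAt.2 fun x => (hd x).differentiableAt.continuousAt
  have hev : ∀ᶠ x in atTop, f x < f x₁ := hlim.eventually_lt_const hpos
  obtain ⟨M, hM⟩ := eventually_atTop.1 hev
  set b := max M x₁ with hb
  have hab : a < b := lt_of_lt_of_le hax (le_max_right _ _)
  obtain ⟨c, hcmem, hcmax⟩ :=
    isCompact_Icc.exists_isMaxOn (nonempty_Icc.2 hab.le) hcont.continuousOn
  have hx1mem : x₁ ∈ Icc a b := ⟨hax.le, le_max_right _ _⟩
  have hfc : f x₁ ≤ f c := hcmax hx1mem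
  have hca : a < c := by
    rcases eq_or_lt_of_le hcmem.1 with h | h
    · exfalso; rw [← h] at hfc; linarith
    · exact h
  have hcb : c < b := by
    rcases eq_or_lt_of_le hcmem.2 with h | h
    · exfalso
      have : f b < f x₁ := hM b (le_max_left _ _)
      rw [h] at hfc; linarith
    · exact h
  have hloc : IsLocalMax f c := hcmax.isLocalMax (Icc_mem_nhds hca hcb)
  exact ⟨c, hca, hloc.hasDerivAt_eq_zero (hd c)⟩

theorem helper_left {f f' : ℝ → ℝ} (hd : ∀ x, HasDerivAt f (f' x) x) {a x₁ : ℝ}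
    (ha : f a = 0) (hax : x₁ < a) (hpos : 0 < f x₁) (hlim : Tendsto f atBot (𝓝 0)) :
    ∃ c, c < a ∧ f' c = 0 := by
  have hd' : ∀ x, HasDerivAt (fun y => f (-y)) (-f' (-x)) x := fun x => by
    simpa [Function.comp_def] using (hd (-x)).comp x (hasDerivAt_neg x)
  have h1 : (-a : ℝ) < -x₁ := by linarith
  obtain ⟨c, hc, hc0⟩ := helper_right hd' (by simpa using ha) h1 (by simpa using hpos)
    (hlim.comp tendsto_neg_atTop_atBot)
  exact ⟨-c, by linarith, by simpa using hc0⟩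



theorem g_hasDeriv (p : ℝ[X]) (lam : ℝ) (x : ℝ) :
    HasDerivAt (fun y => Real.exp (-lam * y) * p.eval y)
      (Real.exp (-lam * x) * (derivative p - C lam * p).eval x) x := by
  have h1 : HasDerivAt (fun y : ℝ => Real.exp (-lam * y)) (-lam * Real.exp (-lam * x)) x := by
    have := (Real.hasDerivAt_exp (-lam * x)).comp x ((hasDerivAt_id x).const_mul (-lam))
    simpa [Function.comp_def, mul_comm] using this
  have h2 := p.hasDerivAt x
  have := h1.mul h2
  refine this.congr_deriv ?_
  simp [eval_sub, eval_mul]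
  ring

theorem g_tendsto_top (p : ℝ[X]) {lam : ℝ} (hlam : 0 < lam) :
    Tendsto (fun y => Real.exp (-lam * y) * p.eval y) atTop (𝓝 0) := by
  have h1 : Tendsto (fun y : ℝ => lam * y) atTop atTop :=
    Tendsto.const_mul_atTop hlam tendsto_id
  have h2 := (p.comp (C lam⁻¹ * X)).tendsto_div_exp_atTop
  have h3 := h2.comp h1
  have : (fun y => Real.exp (-lam * y) * p.eval y) =
      (fun x => (p.comp (C lam⁻¹ * X)).eval x / Real.exp x) ∘ fun y => lam * y := by
    funext y
    simp only [Function.comp_apply, eval_comp, eval_mul, eval_C, eval_X]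
    rw [inv_mul_cancel_left₀ (ne_of_gt hlam), neg_mul, Real.exp_neg]
    ring
  rw [this]
  exact h3

theorem g_tendsto_bot (p : ℝ[X]) {lam : ℝ} (hlam : lam < 0) :
    Tendsto (fun y => Real.exp (-lam * y) * p.eval y) atBot (𝓝 0) := by
  have h1 : Tendsto (fun y : ℝ => -y) atBot atTop := tendsto_neg_atBot_atTop
  have h2 := g_tendsto_top (p.comp (-X)) (lam := -lam) (by linarith)
  have h3 := h2.comp h1
  have : (fun y => Real.exp (-lam * y) * p.eval y) =
      (fun y => Real.exp (-(-lam) * y) * (p.comp (-X)).eval y) ∘ fun y : ℝ => -y := by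
    funext y
    simp [eval_comp, mul_comm]
  rw [this]
  exact h3

/-- Rolle step between two roots of `p`. -/
theorem rolle_exp (p : ℝ[X]) (lam : ℝ) {u v : ℝ} (huv : u < v)
    (hu : p.IsRoot u) (hv : p.IsRoot v) :
    ∃ c ∈ Ioo u v, (derivative p - C lam * p).IsRoot c := by
  set g := fun y => Real.exp (-lam * y) * p.eval y with hg
  have hcont : ContinuousOn g (Icc u v) :=
    (Continuous.mul (Real.continuous_exp.comp (continuous_const.mul continuous_id))
      p.continuous_aeval).continuousOn
  have hI : g u = g v := by simp [hg, hu.eq_zero, hv.eq_zero]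
  obtain ⟨c, hc, hc0⟩ := exists_hasDerivAt_eq_zero huv hcont hI fun x _ => g_hasDeriv p lam x
  refine ⟨c, hc, ?_⟩
  have := (Real.exp_ne_zero (-lam * c))
  have : (derivative p - C lam * p).eval c = 0 := by
    rcases mul_eq_zero.1 hc0 with h | h
    · exact absurd h this
    · exact h
  exact this

/-- Outer root: beyond all roots of `p` (for `lam > 0` on the right, `lam < 0` on the left). -/
theorem outer_root (p : ℝ[X]) {lam : ℝ} (hlam : lam ≠ 0) {amin amax : ℝ}
    (hamin : p.IsRoot amin) (hamax : p.IsRoot amax)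
    (hmax : ∀ y, p.IsRoot y → y ≤ amax) (hmin : ∀ y, p.IsRoot y → amin ≤ y) :
    ∃ c, (derivative p - C lam * p).IsRoot c ∧ ¬ p.IsRoot c ∧
      ((∀ y, p.IsRoot y → y < c) ∨ (∀ y, p.IsRoot y → c < y)) := by
  set g := fun y => Real.exp (-lam * y) * p.eval y with hgdef
  have hderiv := g_hasDeriv p lam
  rcases lt_or_gt_of_ne hlam with hneg | hpos
  · -- lam < 0 : work to the left of the minimal root
    have hga : g amin = 0 := by simp [hgdef, hamin.eq_zero]
    set a := amin with hadef
    set x₁ := a - 1 with hx₁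
    have hx1root : ¬ p.IsRoot x₁ := fun h => by
      have := hmin x₁ h; simp [hx₁] at this; linarith
    have hgx1 : g x₁ ≠ 0 := by
      simp only [hgdef, mul_ne_zero_iff]
      exact ⟨Real.exp_ne_zero _, hx1root⟩
    have hlim := g_tendsto_bot p hneg
    have hout : ∃ c, c < a ∧ Real.exp (-lam * c) * (derivative p - C lam * p).eval c = 0 := by
      rcases hgx1.lt_or_gt with hneg' | hpos'
      · obtain ⟨c, hc, hc0⟩ := helper_left (f := fun y => -g y) (f' := fun x =>
          -(Real.exp (-lam * x) * (derivative p - C lam * p).eval x))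
          (fun x => (hderiv x).neg) (by simp [hga]) (show x₁ < a by simp [hx₁])
          (by simpa using hneg') (by simpa [hgdef, neg_mul] using hlim.neg)
        exact ⟨c, hc, by simpa using hc0⟩
      · obtain ⟨c, hc, hc0⟩ := helper_left hderiv hga (show x₁ < a by simp [hx₁])
          hpos' hlim
        exact ⟨c, hc, hc0⟩
    obtain ⟨c, hca, hc0⟩ := hout
    have hcroot : (derivative p - C lam * p).IsRoot c := by
      rcases mul_eq_zero.1 hc0 with h | h
      · exact absurd h (Real.exp_ne_zero _)
      · exact h
    have hcnp : ¬ p.IsRoot c := fun h => by have := hmin c h; linarith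
    exact ⟨c, hcroot, hcnp, Or.inr fun y hy => lt_of_lt_of_le hca (hmin y hy)⟩
  · -- lam > 0 : to the right of the maximal root
    have hga : g amax = 0 := by simp [hgdef, hamax.eq_zero]
    set a := amax with hadef
    set x₁ := a + 1 with hx₁
    have hx1root : ¬ p.IsRoot x₁ := fun h => by
      have := hmax x₁ h; simp [hx₁] at this; linarith
    have hgx1 : g x₁ ≠ 0 := by
      simp only [hgdef, mul_ne_zero_iff]
      exact ⟨Real.exp_ne_zero _, hx1root⟩
    have hlim := g_tendsto_top p hpos
    have hout : ∃ c, a < c ∧ Real.exp (-lam * c) * (derivative p - C lam * p).eval c = 0 := by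
      rcases hgx1.lt_or_gt with hneg' | hpos'
      · obtain ⟨c, hc, hc0⟩ := helper_right (f := fun y => -g y) (f' := fun x =>
          -(Real.exp (-lam * x) * (derivative p - C lam * p).eval x))
          (fun x => (hderiv x).neg) (by simp [hga]) (show a < x₁ by simp [hx₁])
          (by simpa using hneg') (by simpa [hgdef, neg_mul] using hlim.neg)
        exact ⟨c, hc, by simpa using hc0⟩
      · obtain ⟨c, hc, hc0⟩ := helper_right hderiv hga (show a < x₁ by simp [hx₁])
          hpos' hlim
        exact ⟨c, hc, hc0⟩
    obtain ⟨c, hca, hc0⟩ := hout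
    have hcroot : (derivative p - C lam * p).IsRoot c := by
      rcases mul_eq_zero.1 hc0 with h | h
      · exact absurd h (Real.exp_ne_zero _)
      · exact h
    have hcnp : ¬ p.IsRoot c := fun h => by have := hmax c h; linarith
    exact ⟨c, hcroot, hcnp, Or.inl fun y hy => lt_of_le_of_lt (hmax y hy) hca⟩

theorem natDegree_sub_lam (p : ℝ[X]) (hp : p ≠ 0) {lam : ℝ} (hlam : lam ≠ 0) :
    (derivative p - C lam * p).natDegree = p.natDegree ∧ derivative p - C lam * p ≠ 0 := by
  set n := p.natDegree with hn
  have hc : (derivative p - C lam * p).coeff n = -(lam * p.leadingCoeff) := by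
    rw [coeff_sub, coeff_derivative, coeff_C_mul,
      coeff_eq_zero_of_natDegree_lt (lt_add_one n)]
    rw [leadingCoeff]
    ring
  have hcne : (derivative p - C lam * p).coeff n ≠ 0 := by
    rw [hc]
    simp only [neg_ne_zero, mul_ne_zero_iff]
    exact ⟨hlam, leadingCoeff_ne_zero.2 hp⟩
  have hne : derivative p - C lam * p ≠ 0 := fun h => by simp [h] at hcne
  have hle : (derivative p - C lam * p).natDegree ≤ n :=
    (natDegree_sub_le _ _).trans (max_le ((natDegree_derivative_le p).trans (Nat.sub_le _ _))
      (natDegree_C_mul_le _ _))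
  exact ⟨le_antisymm hle (le_natDegree_of_ne_zero hcne), hne⟩

theorem card_roots_le_sub (p : ℝ[X]) (hp : p ≠ 0) {lam : ℝ} (hlam : lam ≠ 0) :
    Multiset.card p.roots ≤ Multiset.card (derivative p - C lam * p).roots := by
  classical
  set q := derivative p - C lam * p with hqdef
  have hq : q ≠ 0 := (natDegree_sub_lam p hp hlam).2
  by_cases hroots : p.roots = 0
  · simp [hroots]
  set s : Finset ℝ := p.roots.toFinset with hs
  have hsne : s.Nonempty := by
    obtain ⟨r, hr⟩ := Multiset.exists_mem_of_ne_zero hroots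
    exact ⟨r, Multiset.mem_toFinset.2 hr⟩
  have hmem : ∀ x, x ∈ s ↔ p.IsRoot x := fun x => by
    rw [hs, Multiset.mem_toFinset, mem_roots hp]
  set smax := s.max' hsne with hsmax
  have hf : ∀ r ∈ s.erase smax, ∃ c, q.IsRoot c ∧ ¬ p.IsRoot c ∧ r < c ∧
      ∀ y ∈ s, r < y → c < y := by
    intro r hr
    have hrs : r ∈ s := Finset.mem_of_mem_erase hr
    have hrlt : r < smax := lt_of_le_of_ne (s.le_max' r hrs) (Finset.ne_of_mem_erase hr)
    set t := s.filter (fun y => r < y) with ht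
    have htne : t.Nonempty := ⟨smax, Finset.mem_filter.2 ⟨s.max'_mem hsne, hrlt⟩⟩
    set nxt := t.min' htne with hnxt
    have hnxtt : nxt ∈ t := t.min'_mem htne
    have hnxts : nxt ∈ s := (Finset.mem_filter.1 hnxtt).1
    have hrnxt : r < nxt := (Finset.mem_filter.1 hnxtt).2
    obtain ⟨c, hc, hcroot⟩ := rolle_exp p lam hrnxt ((hmem r).1 hrs) ((hmem nxt).1 hnxts)
    refine ⟨c, hcroot, ?_, hc.1, ?_⟩
    · intro hcp
      have hcs : c ∈ t := Finset.mem_filter.2 ⟨(hmem c).2 hcp, hc.1⟩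
      exact absurd (t.min'_le c hcs) (not_le.2 hc.2)
    · intro y hy hry
      exact lt_of_lt_of_le hc.2 (t.min'_le y (Finset.mem_filter.2 ⟨hy, hry⟩))
  set F : ℝ → ℝ := fun r => if h : r ∈ s.erase smax then (hf r h).choose else 0 with hF
  have hFspec : ∀ r (h : r ∈ s.erase smax), q.IsRoot (F r) ∧ ¬ p.IsRoot (F r) ∧ r < F r ∧
      ∀ y ∈ s, r < y → F r < y := by
    intro r h
    have : F r = (hf r h).choose := by rw [hF]; simp only [dif_pos h]
    rw [this]
    exact (hf r h).choose_spec
  obtain ⟨cs, hcsq, hcsp, hcsside⟩ := outer_root p hlam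
    ((hmem (s.min' hsne)).1 (s.min'_mem hsne)) ((hmem smax).1 (s.max'_mem hsne))
    (fun y hy => s.le_max' y ((hmem y).2 hy))
    (fun y hy => s.min'_le y ((hmem y).2 hy))
  set R0 : Finset ℝ := (s.erase smax).image F with hR0
  have hFmono : ∀ r ∈ s.erase smax, ∀ r' ∈ s.erase smax, r < r' → F r < F r' := by
    intro r hr r' hr' hlt
    have h1 := hFspec r hr
    have h2 := hFspec r' hr'
    calc F r < r' := h1.2.2.2 r' (Finset.mem_of_mem_erase hr') hlt
    _ < F r' := h2.2.2.1
  have hFinj : Set.InjOn F (s.erase smax) := by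
    intro r hr r' hr' heq
    by_contra hne
    rcases lt_or_gt_of_ne hne with h | h
    · exact absurd heq (ne_of_lt (hFmono _ hr _ hr' h))
    · exact absurd heq.symm (ne_of_lt (hFmono _ hr' _ hr h))
  have hcsR0 : cs ∉ R0 := by
    intro hcs
    obtain ⟨r, hr, hrF⟩ := Finset.mem_image.1 hcs
    have h1 := hFspec r hr
    rcases hcsside with hside | hside
    · have h2 : F r < smax := h1.2.2.2 smax (s.max'_mem hsne)
        (lt_of_le_of_ne (s.le_max' r (Finset.mem_of_mem_erase hr)) (Finset.ne_of_mem_erase hr))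
      have h3 := hside smax ((hmem smax).1 (s.max'_mem hsne))
      rw [hrF] at h2
      linarith
    · have h3 := hside r ((hmem r).1 (Finset.mem_of_mem_erase hr))
      have h2 := h1.2.2.1
      rw [hrF] at h2
      linarith
  set R : Finset ℝ := insert cs R0 with hR
  have hRcard : R.card = s.card := by
    rw [hR, Finset.card_insert_of_notMem hcsR0, hR0, Finset.card_image_of_injOn hFinj,
      Finset.card_erase_of_mem (s.max'_mem hsne)]
    have : 1 ≤ s.card := Finset.card_pos.2 hsne
    omega
  have hRprop : ∀ x ∈ R, q.IsRoot x ∧ ¬ p.IsRoot x := by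
    intro x hx
    rcases Finset.mem_insert.1 hx with h | h
    · exact h ▸ ⟨hcsq, hcsp⟩
    · obtain ⟨r, hr, hrF⟩ := Finset.mem_image.1 h
      exact hrF ▸ ⟨(hFspec r hr).1, (hFspec r hr).2.1⟩
  have hsval : s.val ≤ p.roots := by
    rw [hs, Multiset.toFinset_val]
    exact p.roots.dedup_le
  have hN : p.roots - s.val + R.val ≤ q.roots := by
    rw [Multiset.le_iff_count]
    intro x
    rw [Multiset.count_add, Multiset.count_sub]
    by_cases hxR : x ∈ R
    · have hxp : ¬ p.IsRoot x := (hRprop x hxR).2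
      have h0 : p.roots.count x = 0 :=
        Multiset.count_eq_zero.2 (fun h => hxp ((mem_roots hp).1 h))
      rw [h0, Multiset.count_eq_one_of_mem R.nodup hxR, count_roots]
      have := (rootMultiplicity_pos hq).2 (hRprop x hxR).1
      omega
    · have hR0' : R.val.count x = 0 := Multiset.count_eq_zero.2 hxR
      rw [hR0', add_zero]
      by_cases hxp : p.IsRoot x
      · have hxs : x ∈ s := (hmem x).2 hxp
        have hcount_s : s.val.count x = 1 := Multiset.count_eq_one_of_mem s.nodup hxs
        rw [hcount_s, count_roots, count_roots]
        have hm := p.rootMultiplicity_sub_one_le_derivative_rootMultiplicity x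
        have h1 : (X - C x) ^ (p.rootMultiplicity x - 1) ∣ derivative p :=
          dvd_trans (pow_dvd_pow _ hm) ((derivative p).pow_rootMultiplicity_dvd x)
        have h2 : (X - C x) ^ (p.rootMultiplicity x - 1) ∣ C lam * p :=
          Dvd.dvd.mul_left (dvd_trans (pow_dvd_pow _ (Nat.sub_le _ _))
            (p.pow_rootMultiplicity_dvd x)) _
        have h3 : (X - C x) ^ (p.rootMultiplicity x - 1) ∣ q := by
          rw [hqdef]
          exact dvd_sub h1 h2
        exact (le_rootMultiplicity_iff hq).2 h3
      · have h0 : p.roots.count x = 0 :=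
          Multiset.count_eq_zero.2 (fun h => hxp ((mem_roots hp).1 h))
        simp [h0]
  have hcard := Multiset.card_le_card hN
  rw [Multiset.card_add, Multiset.card_sub hsval] at hcard
  have h1 : Multiset.card s.val ≤ Multiset.card p.roots := Multiset.card_le_card hsval
  have h2 : Multiset.card R.val = R.card := rfl
  have h3 : Multiset.card s.val = s.card := rfl
  omega

theorem hyp_C (x : ℝ) : Hyperbolic (C x) := by
  simp [Hyperbolic, roots_C]

theorem hyp_shift {p : ℝ[X]} (hp : Hyperbolic p) (lam : ℝ) :
    Hyperbolic (derivative p - C lam * p) := by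
  by_cases hp0 : p = 0
  · subst hp0
    simp [Hyperbolic]
  by_cases hn : p.natDegree = 0
  · obtain ⟨c, rfl⟩ := natDegree_eq_zero.1 hn
    have h : derivative (C c) - C lam * C c = C (-(lam * c)) := by
      rw [derivative_C, zero_sub, ← C_mul, ← C_neg]
    rw [h]
    exact hyp_C _
  by_cases hlam : lam = 0
  · subst hlam
    simp only [map_zero, zero_mul, sub_zero]
    have h1 := p.card_roots_le_derivative
    have h2 : Multiset.card (derivative p).roots ≤ (derivative p).natDegree :=
      (derivative p).card_roots'
    have h3 : (derivative p).natDegree ≤ p.natDegree - 1 := natDegree_derivative_le p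
    unfold Hyperbolic at *
    omega
  · have h1 := card_roots_le_sub p hp0 hlam
    have hdeg := (natDegree_sub_lam p hp0 hlam).1
    have h2 : Multiset.card (derivative p - C lam * p).roots ≤
        (derivative p - C lam * p).natDegree := card_roots' _
    unfold Hyperbolic at *
    omega




theorem hyp_zero : Hyperbolic 0 := by simp [Hyperbolic]

theorem hyp_smul {p : ℝ[X]} (hp : Hyperbolic p) {c : ℝ} (hc : c ≠ 0) : Hyperbolic (c • p) := by
  rw [Polynomial.smul_eq_C_mul]
  unfold Hyperbolic at *
  rw [roots_C_mul p hc, natDegree_C_mul hc]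
  exact hp

theorem hyp_Xpow (n : ℕ) : Hyperbolic ((X : ℝ[X]) ^ n) := by
  unfold Hyperbolic
  rw [roots_pow, roots_X, natDegree_X_pow]
  simp

theorem coeff_sum_CX (f : ℕ → ℝ) (m i : ℕ) :
    (∑ j ∈ Finset.range m, C (f j) * X ^ j).coeff i = if i < m then f i else 0 := by
  simp only [finset_sum_coeff, coeff_C_mul, coeff_X_pow, mul_ite, mul_one, mul_zero]
  rw [Finset.sum_ite_eq (Finset.range m) i f]
  simp [Finset.mem_range]

/-- Complex characterization of hyperbolicity for nonzero polynomials. -/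
theorem hyp_iff_allreal {p : ℝ[X]} (hp : p ≠ 0) :
    Hyperbolic p ↔ ∀ z : ℂ, (p.map (algebraMap ℝ ℂ)).IsRoot z → z.im = 0 := by
  constructor
  · intro h z hz
    have hfact := C_leadingCoeff_mul_prod_multiset_X_sub_C (p := p) h
    have hmap : p.map (algebraMap ℝ ℂ) = C ((p.leadingCoeff : ℝ) : ℂ) *
        ((p.roots.map fun a => X - C ((a : ℝ) : ℂ)).prod) := by
      conv_lhs => rw [← hfact]
      rw [Polynomial.map_mul, map_C]
      congr 1
      rw [show (Polynomial.map (algebraMap ℝ ℂ) (Multiset.map (fun a => X - C a) p.roots).prod)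
          = (mapRingHom (algebraMap ℝ ℂ)) ((Multiset.map (fun a => X - C a) p.roots).prod)
          from rfl, map_multiset_prod, Multiset.map_map]
      congr 1
      apply Multiset.map_congr rfl
      intro r _
      simp
    rw [IsRoot, hmap, eval_mul, eval_C] at hz
    rcases mul_eq_zero.1 hz with h0 | h0
    · exact absurd h0 (by exact_mod_cast leadingCoeff_ne_zero.2 hp)
    · rw [eval_multiset_prod, Multiset.map_map] at h0
      have h1 := Multiset.prod_eq_zero_iff.1 h0
      rw [Multiset.mem_map] at h1
      obtain ⟨r, hr, hr0⟩ := h1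
      simp only [Function.comp_apply, eval_sub, eval_X, eval_C] at hr0
      have : z = ((r : ℝ) : ℂ) := by linear_combination hr0
      rw [this]
      simp
  · intro h
    set pc := p.map (algebraMap ℝ ℂ) with hpc
    have hpc0 : pc ≠ 0 := by
      rw [hpc, Ne, Polynomial.map_eq_zero_iff (algebraMap ℝ ℂ).injective]
      exact hp
    have hcard : Multiset.card pc.roots = pc.natDegree := by
      rw [← splits_iff_card_roots]
      exact IsAlgClosed.splits pc
    have hre : pc.roots.map (fun z : ℂ => ((z.re : ℝ) : ℂ)) = pc.roots := by
      conv_rhs => rw [← Multiset.map_id' pc.roots]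
      apply Multiset.map_congr rfl
      intro z hz
      have hz' : pc.IsRoot z := (mem_roots hpc0).1 hz
      have him := h z hz'
      exact Complex.ext (by simp) (by simp [him])
    have hlead : pc.leadingCoeff = ((p.leadingCoeff : ℝ) : ℂ) := by
      rw [hpc, leadingCoeff_map]
      rfl
    have hfactC := C_leadingCoeff_mul_prod_multiset_X_sub_C (p := pc) hcard
    set sR : Multiset ℝ := pc.roots.map Complex.re with hsR
    set w : ℝ[X] := C p.leadingCoeff * (sR.map fun a => X - C a).prod with hw
    have hmapw : w.map (algebraMap ℝ ℂ) = pc := by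
      rw [hw, Polynomial.map_mul, map_C]
      rw [show (Polynomial.map (algebraMap ℝ ℂ) (Multiset.map (fun a => X - C a) sR).prod)
          = (mapRingHom (algebraMap ℝ ℂ)) ((Multiset.map (fun a => X - C a) sR).prod)
          from rfl, map_multiset_prod, Multiset.map_map]
      have : Multiset.map (⇑(mapRingHom (algebraMap ℝ ℂ)) ∘ fun a => X - C a) sR
          = Multiset.map (fun a : ℝ => X - C ((a : ℝ) : ℂ)) sR := by
        apply Multiset.map_congr rfl
        intro r _
        simp
      rw [this, hsR, Multiset.map_map]
      have h2 : Multiset.map ((fun a : ℝ => X - C ((a : ℝ) : ℂ)) ∘ Complex.re) pc.roots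
          = Multiset.map (fun z : ℂ => X - C z) pc.roots := by
        apply Multiset.map_congr rfl
        intro z hz
        have him := h z ((mem_roots hpc0).1 hz)
        simp only [Function.comp_apply]
        congr 1
        exact congrArg C (Complex.ext (by simp) (by simp [him]))
      rw [h2]
      have h3 : C ((algebraMap ℝ ℂ) p.leadingCoeff) = C pc.leadingCoeff := by
        rw [hlead]; rfl
      rw [h3]
      exact hfactC
    have hpw : p = w := by
      apply Polynomial.map_injective (algebraMap ℝ ℂ) Complex.ofReal_injective
      rw [hmapw, hpc]
    have hlne : p.leadingCoeff ≠ 0 := leadingCoeff_ne_zero.2 hp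
    have hroots : p.roots = sR := by
      conv_lhs => rw [hpw]
      rw [hw, roots_C_mul _ hlne, roots_multiset_prod_X_sub_C]
    have hdeg : pc.natDegree = p.natDegree := by
      rw [hpc]
      exact natDegree_map_eq_of_injective Complex.ofReal_injective p
    unfold Hyperbolic
    rw [hroots, hsR, Multiset.card_map, hcard, hdeg]
set_option maxHeartbeats 800000 in
theorem op_of_symbol {k : ℕ} {a : ℕ → ℝ}
    (hQ : Hyperbolic (∑ j ∈ Finset.range (k + 1), C (a j) * X ^ j)) :
    ∀ p : Polynomial ℝ, Hyperbolic p →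
      Hyperbolic (∑ j ∈ Finset.range (k + 1),
        C (a j) * (fun q : Polynomial ℝ => derivative q)^[j] p) := by
  classical
  intro p hp
  set Q := ∑ j ∈ Finset.range (k + 1), C (a j) * X ^ j with hQdef
  by_cases hQ0 : Q = 0
  · have hcoef : ∀ j, j < k + 1 → a j = 0 := by
      intro j hj
      have h1 := coeff_sum_CX a (k + 1) j
      rw [← hQdef, hQ0] at h1
      simpa [hj] using h1.symm
    have h2 : (∑ j ∈ Finset.range (k + 1),
        C (a j) * (fun q : Polynomial ℝ => derivative q)^[j] p) = 0 := by
      apply Finset.sum_eq_zero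
      intro j hj
      rw [hcoef j (Finset.mem_range.1 hj)]
      simp
    rw [h2]
    exact hyp_zero
  set D : Module.End ℝ ℝ[X] := Polynomial.derivative with hD
  have hT : (Polynomial.aeval D Q) p = ∑ j ∈ Finset.range (k + 1),
      C (a j) * (fun q : Polynomial ℝ => derivative q)^[j] p := by
    rw [hQdef, map_sum, LinearMap.sum_apply]
    apply Finset.sum_congr rfl
    intro j _
    rw [map_mul, aeval_C, aeval_X_pow, Module.End.mul_apply, Module.algebraMap_end_apply,
      Polynomial.smul_eq_C_mul, Module.End.pow_apply]
  rw [← hT]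
  have hfact := C_leadingCoeff_mul_prod_multiset_X_sub_C (p := Q) hQ
  have hprod : ∀ (s : Multiset ℝ) (q : ℝ[X]), Hyperbolic q →
      Hyperbolic ((Polynomial.aeval D ((s.map fun r => X - C r).prod)) q) := by
    intro s
    induction s using Multiset.induction_on with
    | empty => intro q hq; simpa using hq
    | cons r s ih =>
      intro q hq
      rw [Multiset.map_cons, Multiset.prod_cons,
        mul_comm (X - C r) ((s.map fun r => X - C r).prod), map_mul, Module.End.mul_apply]
      have h3 : (Polynomial.aeval D (X - C r)) q = derivative q - C r * q := by
        rw [map_sub, aeval_X, aeval_C, LinearMap.sub_apply, Module.algebraMap_end_apply,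
          Polynomial.smul_eq_C_mul]
      rw [h3]
      exact ih _ (hyp_shift hq r)
  have hmain : (Polynomial.aeval D Q) p = Q.leadingCoeff •
      ((Polynomial.aeval D ((Q.roots.map fun r => X - C r).prod)) p) := by
    conv_lhs => rw [← hfact]
    rw [map_mul, aeval_C, Module.End.mul_apply, Module.algebraMap_end_apply]
  rw [hmain]
  exact hyp_smul (hprod Q.roots p hp) (leadingCoeff_ne_zero.2 hQ0)



theorem iter_deriv_Xpow (n j : ℕ) (hj : j ≤ n) :
    (fun q : Polynomial ℝ => derivative q)^[j] ((X : ℝ[X]) ^ n)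
      = C ((n.descFactorial j : ℝ)) * X ^ (n - j) := by
  induction j with
  | zero => simp
  | succ j ih =>
    rw [Function.iterate_succ_apply', ih (le_of_lt (Nat.lt_of_lt_of_le (Nat.lt_succ_self j) hj)),
      derivative_C_mul, derivative_X_pow]
    rw [← mul_assoc, ← C_mul, Nat.descFactorial_succ]
    have h1 : n - j - 1 = n - (j + 1) := by omega
    have h2 : ((n.descFactorial j : ℝ)) * ((n - j : ℕ) : ℝ)
        = (((n - j) * n.descFactorial j : ℕ) : ℝ) := by
      push_cast
      ring
    rw [h1, h2]

theorem TXn_eq {k n : ℕ} (a : ℕ → ℝ) (hkn : k ≤ n) :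
    (∑ j ∈ Finset.range (k + 1), C (a j) * (fun q : Polynomial ℝ => derivative q)^[j] ((X:ℝ[X])^n))
      = ∑ j ∈ Finset.range (k + 1), C (a j * (n.descFactorial j : ℝ)) * X ^ (n - j) := by
  apply Finset.sum_congr rfl
  intro j hj
  rw [iter_deriv_Xpow n j (le_trans (Nat.lt_succ_iff.1 (Finset.mem_range.1 hj)) hkn),
    ← mul_assoc, ← C_mul]

theorem TXn_ne_zero {k n : ℕ} {a : ℕ → ℝ} (hkn : k ≤ n) {j₀ : ℕ} (hj₀ : j₀ < k + 1)
    (ha : a j₀ ≠ 0) :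
    (∑ j ∈ Finset.range (k + 1), C (a j * (n.descFactorial j : ℝ)) * X ^ (n - j)) ≠ 0 := by
  intro h0
  have hc : (∑ j ∈ Finset.range (k + 1),
      C (a j * (n.descFactorial j : ℝ)) * X ^ (n - j)).coeff (n - j₀) ≠ 0 := by
    rw [finset_sum_coeff]
    simp only [coeff_C_mul, coeff_X_pow]
    rw [Finset.sum_eq_single j₀]
    · simp only [if_true, mul_one]
      apply mul_ne_zero ha
      rw [Ne, Nat.cast_eq_zero, Nat.descFactorial_eq_zero_iff_lt]
      have hj₀' : j₀ ≤ k := Nat.lt_succ_iff.1 hj₀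
      omega
    · intro j hj hne
      have hj' : j ≤ k := Nat.lt_succ_iff.1 (Finset.mem_range.1 hj)
      have hj₀' : j₀ ≤ k := Nat.lt_succ_iff.1 hj₀
      have : ¬ (n - j₀ = n - j) := by omega
      simp [this]
    · intro h
      exact absurd (Finset.mem_range.2 hj₀) h
  rw [h0] at hc
  simp at hc
theorem aeval_sum_pow {k : ℕ} (c : ℕ → ℝ) (e : ℕ → ℕ) (w : ℂ) :
    Polynomial.aeval w (∑ j ∈ Finset.range (k + 1), C (c j) * X ^ (e j))
      = ∑ j ∈ Finset.range (k + 1), ((c j : ℝ) : ℂ) * w ^ (e j) := by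
  rw [map_sum]
  apply Finset.sum_congr rfl
  intro j _
  rw [map_mul, aeval_C, map_pow, aeval_X]
  norm_num

theorem Pn_roots_real {k n : ℕ} {a : ℕ → ℝ} (hkn : k ≤ n) (hn : 0 < n)
    (hroots : ∀ z : ℂ,
      ((∑ j ∈ Finset.range (k + 1), C (a j * (n.descFactorial j : ℝ)) * X ^ (n - j)).map
        (algebraMap ℝ ℂ)).IsRoot z → z.im = 0)
    (z : ℂ)
    (hz : ((∑ j ∈ Finset.range (k + 1),
        C (a j * ((n.descFactorial j : ℝ) / (n : ℝ) ^ j)) * X ^ j).map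
        (algebraMap ℝ ℂ)).IsRoot z) : z.im = 0 := by
  by_cases hz0 : z = 0
  · simp [hz0]
  have hP : Polynomial.aeval z (∑ j ∈ Finset.range (k + 1),
      C (a j * ((n.descFactorial j : ℝ) / (n : ℝ) ^ j)) * X ^ j) = 0 := by
    rw [aeval_def, ← eval_map]
    exact hz
  have hP' := hP
  rw [show (∑ j ∈ Finset.range (k + 1), C (a j * ((n.descFactorial j : ℝ) / (n : ℝ) ^ j)) * X ^ j)
      = ∑ j ∈ Finset.range (k + 1), C (a j * ((n.descFactorial j : ℝ) / (n : ℝ) ^ j)) * X ^ (id j)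
      from rfl, aeval_sum_pow] at hP'
  simp only [id] at hP'
  set w : ℂ := (n : ℂ) / z with hw
  have hnC : (n : ℂ) ≠ 0 := Nat.cast_ne_zero.2 hn.ne'
  have hwne : w ≠ 0 := div_ne_zero hnC hz0
  have hwz : w * (z / (n : ℂ)) = 1 := by
    rw [hw]
    field_simp
  have hTw : Polynomial.aeval w (∑ j ∈ Finset.range (k + 1),
      C (a j * (n.descFactorial j : ℝ)) * X ^ (n - j)) = 0 := by
    rw [aeval_sum_pow]
    have heq : ∀ j ∈ Finset.range (k + 1),
        ((a j * (n.descFactorial j : ℝ) : ℝ) : ℂ) * w ^ (n - j)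
        = w ^ n * (((a j * ((n.descFactorial j : ℝ) / (n : ℝ) ^ j) : ℝ) : ℂ) * z ^ j) := by
      intro j hj
      have hjn : j ≤ n := le_trans (Nat.lt_succ_iff.1 (Finset.mem_range.1 hj)) hkn
      have h1 : w ^ n = w ^ (n - j) * w ^ j := by
        rw [← pow_add]
        congr 1
        omega
      calc ((a j * (n.descFactorial j : ℝ) : ℝ) : ℂ) * w ^ (n - j)
          = ((a j * (n.descFactorial j : ℝ) : ℝ) : ℂ) * w ^ (n - j) * (w * (z / (n : ℂ))) ^ j := by
            rw [hwz, one_pow, mul_one]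
        _ = w ^ n * (((a j * ((n.descFactorial j : ℝ) / (n : ℝ) ^ j) : ℝ) : ℂ) * z ^ j) := by
            rw [mul_pow, h1]
            push_cast
            rw [div_pow]
            ring
    rw [Finset.sum_congr rfl heq, ← Finset.mul_sum, hP', mul_zero]
  have hwroot : ((∑ j ∈ Finset.range (k + 1),
      C (a j * (n.descFactorial j : ℝ)) * X ^ (n - j)).map (algebraMap ℝ ℂ)).IsRoot w := by
    rw [IsRoot, eval_map, ← aeval_def]
    exact hTw
  have hwim := hroots w hwroot
  have hzw : z = (n : ℂ) / w := by
    rw [hw]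
    field_simp
  have hwre : w = ((w.re : ℝ) : ℂ) := (Complex.ext (by simp) (by simp [hwim])).symm
  have h5 : z = (((n : ℝ) / w.re : ℝ) : ℂ) := by
    rw [hzw, Complex.ofReal_div]
    norm_num
    rw [hwre]
    norm_num
  rw [h5, Complex.ofReal_im]
theorem prod_ge_one {s : Multiset ℂ} {f : ℂ → ℝ} (h : ∀ z ∈ s, 1 ≤ f z) :
    1 ≤ (s.map f).prod := by
  induction s using Multiset.induction_on with
  | empty => simp
  | cons r s ih =>
    rw [Multiset.map_cons, Multiset.prod_cons]
    have h1 := h r (Multiset.mem_cons_self r s)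
    have h2 := ih (fun z hz => h z (Multiset.mem_cons_of_mem hz))
    nlinarith

theorem prod_le_prod_delta {δ : ℝ} (hδ0 : 0 < δ) (f g : ℂ → ℝ) :
    ∀ {s : Multiset ℂ}, (∀ z ∈ s, δ * f z ≤ g z) → (∀ z ∈ s, 1 ≤ f z) →
    δ ^ (Multiset.card s) * (s.map f).prod ≤ (s.map g).prod := by
  intro s
  induction s using Multiset.induction_on with
  | empty => simp
  | cons r s ih =>
    intro hfg hf1
    rw [Multiset.map_cons, Multiset.prod_cons, Multiset.map_cons, Multiset.prod_cons,
      Multiset.card_cons]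
    have h1 := hfg r (Multiset.mem_cons_self r s)
    have h2 := ih (fun z hz => hfg z (Multiset.mem_cons_of_mem hz))
      (fun z hz => hf1 z (Multiset.mem_cons_of_mem hz))
    have h3 : 1 ≤ (s.map f).prod := prod_ge_one (fun z hz => hf1 z (Multiset.mem_cons_of_mem hz))
    have h5 : 0 ≤ δ ^ Multiset.card s * (s.map f).prod := by positivity
    have h6 : 0 ≤ g r := by
      have := hf1 r (Multiset.mem_cons_self r s)
      nlinarith
    calc δ ^ (Multiset.card s + 1) * (f r * (s.map f).prod)
        = (δ * f r) * (δ ^ Multiset.card s * (s.map f).prod) := by ring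
      _ ≤ g r * (s.map g).prod := mul_le_mul h1 h2 h5 h6

theorem delta_ineq (x y x₀ r : ℝ) :
    min (1/2) (y^2 / (2 * (2 * (x₀ - x)^2 + 1))) * ((x₀ - r)^2 + 1) ≤ (x - r)^2 + y^2 := by
  set δ := min (1/2) (y^2 / (2 * (2 * (x₀ - x)^2 + 1))) with hδ
  have h1 : δ ≤ 1/2 := min_le_left _ _
  have h3 : (0:ℝ) < 2 * (2 * (x₀ - x)^2 + 1) := by positivity
  have h2 : δ ≤ y^2 / (2 * (2 * (x₀ - x)^2 + 1)) := min_le_right _ _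
  have h4 : δ * (2 * (2 * (x₀ - x)^2 + 1)) ≤ y^2 := by
    rw [← le_div_iff₀ h3]
    exact h2
  have h0 : 0 ≤ δ := le_min (by norm_num) (by positivity)
  nlinarith [sq_nonneg (x₀ - x + (x - r)), sq_nonneg (x₀ - x - (x - r)), sq_nonneg (x - r),
    mul_nonneg h0 (sq_nonneg (x - r))]

theorem normSq_bound {P : ℝ[X]} (hP : P ≠ 0)
    (hreal : ∀ z : ℂ, (P.map (algebraMap ℝ ℂ)).IsRoot z → z.im = 0)
    {K : ℕ} (hdeg : P.natDegree ≤ K) (w w₀ : ℂ) (hw₀ : w₀.im = 1) (hwim : w.im ≠ 0) :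
    min (1/2) (w.im^2 / (2 * (2 * (w₀.re - w.re)^2 + 1))) ^ K *
      Complex.normSq ((P.map (algebraMap ℝ ℂ)).eval w₀)
      ≤ Complex.normSq ((P.map (algebraMap ℝ ℂ)).eval w) := by
  set δ := min (1/2) (w.im^2 / (2 * (2 * (w₀.re - w.re)^2 + 1))) with hδ
  have hδ0 : 0 ≤ δ := le_min (by norm_num) (by positivity)
  have hδ1 : δ ≤ 1 := le_trans (min_le_left _ _) (by norm_num)
  set pc := P.map (algebraMap ℝ ℂ) with hpc
  have hpc0 : pc ≠ 0 := by
    rw [hpc, Ne, Polynomial.map_eq_zero_iff (algebraMap ℝ ℂ).injective]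
    exact hP
  have hcard : Multiset.card pc.roots = pc.natDegree := by
    rw [← splits_iff_card_roots]
    exact IsAlgClosed.splits pc
  have hfact := C_leadingCoeff_mul_prod_multiset_X_sub_C (p := pc) hcard
  have heval : ∀ u : ℂ, Complex.normSq (pc.eval u)
      = Complex.normSq pc.leadingCoeff *
        ((pc.roots.map (fun z => Complex.normSq (u - z))).prod) := by
    intro u
    conv_lhs => rw [← hfact]
    rw [eval_mul, eval_C, map_mul]
    congr 1
    rw [eval_multiset_prod, Multiset.map_map, map_multiset_prod, Multiset.map_map]
    congr 1
    apply Multiset.map_congr rfl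
    intro z _
    simp
  have hperroot : ∀ z ∈ pc.roots, δ * Complex.normSq (w₀ - z) ≤ Complex.normSq (w - z) := by
    intro z hz
    have him : z.im = 0 := hreal z ((mem_roots hpc0).1 hz)
    rw [Complex.normSq_apply, Complex.normSq_apply]
    simp only [Complex.sub_re, Complex.sub_im, him, hw₀, sub_zero]
    have := delta_ineq w.re w.im w₀.re z.re
    rw [hδ]
    nlinarith [this]
  have hge1 : ∀ z ∈ pc.roots, (1:ℝ) ≤ Complex.normSq (w₀ - z) := by
    intro z hz
    have him : z.im = 0 := hreal z ((mem_roots hpc0).1 hz)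
    rw [Complex.normSq_apply]
    simp only [Complex.sub_re, Complex.sub_im, him, hw₀, sub_zero]
    nlinarith [sq_nonneg (w₀.re - z.re)]
  have hδpos : 0 < δ := by
    apply lt_min (by norm_num)
    apply div_pos
    · exact lt_of_le_of_ne (sq_nonneg w.im) (Ne.symm (pow_ne_zero 2 hwim))
    · positivity
  have hmain := prod_le_prod_delta hδpos (fun z => Complex.normSq (w₀ - z))
    (fun z => Complex.normSq (w - z)) hperroot hge1
  rw [heval w₀, heval w]
  have hcards : Multiset.card pc.roots ≤ K := by
    rw [hcard, hpc, natDegree_map_eq_of_injective Complex.ofReal_injective]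
    exact hdeg
  have hpow : δ ^ K ≤ δ ^ (Multiset.card pc.roots) := pow_le_pow_of_le_one hδ0 hδ1 hcards
  have hprod0 : (1:ℝ) ≤ (pc.roots.map (fun z => Complex.normSq (w₀ - z))).prod := prod_ge_one hge1
  have hnc : 0 ≤ Complex.normSq pc.leadingCoeff := Complex.normSq_nonneg _
  calc δ ^ K * (Complex.normSq pc.leadingCoeff *
        (pc.roots.map (fun z => Complex.normSq (w₀ - z))).prod)
      ≤ δ ^ (Multiset.card pc.roots) * (Complex.normSq pc.leadingCoeff *
        (pc.roots.map (fun z => Complex.normSq (w₀ - z))).prod) := by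
        apply mul_le_mul_of_nonneg_right hpow
        have : (0:ℝ) ≤ (pc.roots.map (fun z => Complex.normSq (w₀ - z))).prod := by linarith
        positivity
    _ = Complex.normSq pc.leadingCoeff * (δ ^ (Multiset.card pc.roots) *
        (pc.roots.map (fun z => Complex.normSq (w₀ - z))).prod) := by ring
    _ ≤ Complex.normSq pc.leadingCoeff *
        (pc.roots.map (fun z => Complex.normSq (w - z))).prod :=
        mul_le_mul_of_nonneg_left hmain hnc
theorem tendsto_descFactorial (j : ℕ) :
    Tendsto (fun n : ℕ => (n.descFactorial j : ℝ) / (n:ℝ)^j) atTop (𝓝 1) := by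
  have h1 : Tendsto (fun n : ℕ => ∏ i ∈ Finset.range j, (1 - (i:ℝ)/(n:ℝ))) atTop
      (𝓝 (∏ _i ∈ Finset.range j, (1:ℝ))) := by
    apply tendsto_finset_prod
    intro i _
    simpa using (tendsto_const_nhds (x := (1:ℝ))).sub (tendsto_const_div_atTop_nhds_zero_nat (i : ℝ))
  rw [Finset.prod_const_one] at h1
  apply Tendsto.congr' _ h1
  filter_upwards [eventually_ge_atTop (j+1)] with n hn
  have hn0 : (n:ℝ) ≠ 0 := Nat.cast_ne_zero.2 (by omega)
  rw [Nat.descFactorial_eq_prod_range, Nat.cast_prod,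
    show ((n:ℝ))^j = ∏ _i ∈ Finset.range j, (n:ℝ) from by
      rw [Finset.prod_const, Finset.card_range],
    ← Finset.prod_div_distrib]
  apply Finset.prod_congr rfl
  intro i hi
  have hij : i < j := Finset.mem_range.1 hi
  rw [Nat.cast_sub (by omega : i ≤ n)]
  field_simp

theorem eval_map_sum_CX (c : ℕ → ℝ) (k : ℕ) (w : ℂ) :
    ((∑ j ∈ Finset.range (k + 1), C (c j) * X ^ j).map (algebraMap ℝ ℂ)).eval w
      = ∑ j ∈ Finset.range (k + 1), ((c j : ℝ) : ℂ) * w ^ j := by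
  rw [eval_map, ← aeval_def,
    show (∑ j ∈ Finset.range (k + 1), C (c j) * X ^ j)
      = ∑ j ∈ Finset.range (k + 1), C (c j) * X ^ (id j) from rfl,
    aeval_sum_pow]
  simp only [id]

theorem symbol_of_op {k : ℕ} {a : ℕ → ℝ}
    (hT : ∀ p : Polynomial ℝ, Hyperbolic p →
      Hyperbolic (∑ j ∈ Finset.range (k + 1),
        C (a j) * (fun q : Polynomial ℝ => derivative q)^[j] p)) :
    Hyperbolic (∑ j ∈ Finset.range (k + 1), C (a j) * X ^ j) := by
  set Q := ∑ j ∈ Finset.range (k + 1), C (a j) * X ^ j with hQdef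
  by_cases hQ0 : Q = 0
  · rw [hQ0]
    exact hyp_zero
  have hj₀ : ∃ j₀, j₀ < k + 1 ∧ a j₀ ≠ 0 := by
    by_contra hcon
    push_neg at hcon
    apply hQ0
    rw [hQdef]
    apply Finset.sum_eq_zero
    intro j hj
    rw [hcon j (Finset.mem_range.1 hj)]
    simp
  obtain ⟨j₀, hj₀k, haj₀⟩ := hj₀
  rw [hyp_iff_allreal hQ0]
  by_contra hcon
  push_neg at hcon
  obtain ⟨z, hzroot, hzim⟩ := hcon
  set Pf : ℕ → ℝ[X] := fun n => ∑ j ∈ Finset.range (k + 1),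
      C (a j * ((n.descFactorial j : ℝ) / (n:ℝ)^j)) * X ^ j with hPf
  have hPne : ∀ n : ℕ, k + 1 ≤ n → Pf n ≠ 0 := by
    intro n hn h0
    have hc := coeff_sum_CX (fun j => a j * ((n.descFactorial j : ℝ) / (n:ℝ)^j)) (k+1) j₀
    rw [show (∑ j ∈ Finset.range (k+1),
        C (a j * ((n.descFactorial j : ℝ) / (n:ℝ)^j)) * X ^ j) = Pf n from rfl, h0] at hc
    rw [coeff_zero] at hc
    rw [if_pos hj₀k] at hc
    have hd : ((n.descFactorial j₀ : ℝ) / (n:ℝ)^j₀) ≠ 0 := by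
      apply div_ne_zero
      · rw [Ne, Nat.cast_eq_zero, Nat.descFactorial_eq_zero_iff_lt]
        omega
      · apply pow_ne_zero
        rw [Ne, Nat.cast_eq_zero]
        omega
    exact (mul_ne_zero haj₀ hd) hc.symm
  have hProots : ∀ n : ℕ, k + 1 ≤ n →
      ∀ w : ℂ, ((Pf n).map (algebraMap ℝ ℂ)).IsRoot w → w.im = 0 := by
    intro n hn
    have hkn : k ≤ n := by omega
    have hn0 : 0 < n := by omega
    have hTXn := hT ((X:ℝ[X])^n) (hyp_Xpow n)
    rw [TXn_eq a hkn] at hTXn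
    have hTne := TXn_ne_zero (a := a) hkn hj₀k haj₀ (n := n)
    have hreal := (hyp_iff_allreal hTne).1 hTXn
    exact fun w hw => Pn_roots_real hkn hn0 hreal w hw
  have hdegP : ∀ n, (Pf n).natDegree ≤ k := by
    intro n
    apply natDegree_sum_le_of_forall_le
    intro j hj
    exact le_trans (natDegree_C_mul_le _ _)
      (le_trans (natDegree_X_pow (R := ℝ) j).le (Nat.lt_succ_iff.1 (Finset.mem_range.1 hj)))
  have hev : ∀ w : ℂ, Tendsto (fun n => ((Pf n).map (algebraMap ℝ ℂ)).eval w) atTop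
      (𝓝 ((Q.map (algebraMap ℝ ℂ)).eval w)) := by
    intro w
    have hformQ : ((Q.map (algebraMap ℝ ℂ)).eval w)
        = ∑ j ∈ Finset.range (k+1), ((a j : ℝ):ℂ) * w ^ j := eval_map_sum_CX a k w
    have hform : ∀ n : ℕ, ((Pf n).map (algebraMap ℝ ℂ)).eval w
        = ∑ j ∈ Finset.range (k+1),
          ((a j * ((n.descFactorial j : ℝ) / (n:ℝ)^j) : ℝ):ℂ) * w ^ j := fun n =>
      eval_map_sum_CX (fun j => a j * ((n.descFactorial j : ℝ) / (n:ℝ)^j)) k w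
    rw [hformQ]
    apply Tendsto.congr (fun n => (hform n).symm)
    apply tendsto_finset_sum
    intro j _
    have h1 := tendsto_descFactorial j
    have h2 : Tendsto (fun n : ℕ => a j * ((n.descFactorial j:ℝ)/(n:ℝ)^j)) atTop (𝓝 (a j)) := by
      have := (tendsto_const_nhds (x := a j)).mul h1
      simpa using this
    have h3 : Tendsto (fun n : ℕ =>
        ((a j * ((n.descFactorial j:ℝ)/(n:ℝ)^j) : ℝ) : ℂ)) atTop (𝓝 ((a j : ℝ) : ℂ)) :=
      (Complex.continuous_ofReal.tendsto _).comp h2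
    exact h3.mul tendsto_const_nhds
  have hzero : ∀ x₀ : ℝ, (Q.map (algebraMap ℝ ℂ)).IsRoot (Complex.I + (x₀:ℂ)) := by
    intro x₀
    set w₀ : ℂ := Complex.I + (x₀:ℂ) with hw₀def
    have hw₀im : w₀.im = 1 := by simp [hw₀def]
    set δ := min (1/2) (z.im^2 / (2 * (2 * (w₀.re - z.re)^2 + 1))) with hδ
    have hδpos : 0 < δ := lt_min (by norm_num)
      (div_pos (lt_of_le_of_ne (sq_nonneg z.im) (Ne.symm (pow_ne_zero 2 hzim))) (by positivity))
    have hineq : ∀ n, k + 1 ≤ n →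
        δ ^ k * Complex.normSq (((Pf n).map (algebraMap ℝ ℂ)).eval w₀)
        ≤ Complex.normSq (((Pf n).map (algebraMap ℝ ℂ)).eval z) := by
      intro n hn
      exact normSq_bound (hPne n hn) (hProots n hn) (hdegP n) z w₀ hw₀im hzim
    have hns1 : Tendsto (fun n => Complex.normSq (((Pf n).map (algebraMap ℝ ℂ)).eval z))
        atTop (𝓝 0) := by
      have h4 := (Complex.continuous_normSq.tendsto _).comp (hev z)
      rw [show ((Q.map (algebraMap ℝ ℂ)).eval z) = 0 from hzroot] at h4
      simpa [Function.comp_def] using h4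
    have hns0 : Tendsto (fun n => δ ^ k *
        Complex.normSq (((Pf n).map (algebraMap ℝ ℂ)).eval w₀)) atTop
        (𝓝 (δ ^ k * Complex.normSq ((Q.map (algebraMap ℝ ℂ)).eval w₀))) :=
      tendsto_const_nhds.mul ((Complex.continuous_normSq.tendsto _).comp (hev w₀))
    have hle : δ ^ k * Complex.normSq ((Q.map (algebraMap ℝ ℂ)).eval w₀) ≤ 0 := by
      apply le_of_tendsto_of_tendsto hns0 hns1
      filter_upwards [eventually_ge_atTop (k+1)] with n hn
      exact hineq n hn
    have h6 : Complex.normSq ((Q.map (algebraMap ℝ ℂ)).eval w₀) ≤ 0 := by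
      nlinarith [pow_pos hδpos k, Complex.normSq_nonneg ((Q.map (algebraMap ℝ ℂ)).eval w₀)]
    exact Complex.normSq_eq_zero.1 (le_antisymm h6 (Complex.normSq_nonneg _))
  have hQc0 : Q.map (algebraMap ℝ ℂ) ≠ 0 := by
    rw [Ne, Polynomial.map_eq_zero_iff (algebraMap ℝ ℂ).injective]
    exact hQ0
  have hfin := Polynomial.finite_setOf_isRoot hQc0
  have hinj : Function.Injective (fun x₀ : ℝ => Complex.I + (x₀:ℂ)) := by
    intro x y h
    have := congrArg Complex.re h
    simpa using this
  refine (Set.infinite_of_injective_forall_mem hinj fun x₀ => ?_) hfin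
  rw [Set.mem_setOf_eq]
  exact hzero x₀

end HP

/-- Hermite–Poulain theorem: the differential operator
`T = a₀ + a₁ d/dx + ⋯ + a_k (d/dx)^k` with constant real coefficients maps every
hyperbolic polynomial to a hyperbolic polynomial if and only if its symbol polynomial
`Q(t) = a₀ + a₁ t + ⋯ + a_k t^k` is hyperbolic. -/
theorem stmt_2 (k : ℕ) (a : ℕ → ℝ) :
    (∀ p : Polynomial ℝ, Hyperbolic p →
      Hyperbolic (∑ j ∈ Finset.range (k + 1),
        Polynomial.C (a j) * (fun q : Polynomial ℝ => Polynomial.derivative q)^[j] p)) ↔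
    Hyperbolic (∑ j ∈ Finset.range (k + 1), Polynomial.C (a j) * Polynomial.X ^ j) := by
  constructor
  · exact fun hT => HP.symbol_of_op hT
  · exact fun hQ => HP.op_of_symbol hQ

end
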